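/- Let φ be a flow on E = EuclideanSpace ℝ (Fin n) that is differentiable in the initial state with derivative Dφ, satisfying the cocycle identity Dφ(τ;s,φ(s;t,x)) ∘ Dφ(s;t,x) = Dφ(τ;t,x) for all τ ≥ s ≥ t and all x, and such that τ ↦ ‖Dφ(τ;t,x) y‖^p is continuous. Fix p ≥ 1, δ > 0, t, x, y, and define g(s) = ∫_s^{s+δ} ‖Dφ(τ;s,φ(s;t,x)) (Dφ(s;t,x) y)‖^p dτ for s ≥ t. Then g(s) = ∫_s^{s+δ} ‖Dφ(τ;t,x) y‖^p dτ for all s ≥ t, and g has right derivative at s = t equal to ‖Dφ(t+δ;t,x) y‖^p − ‖y‖^p. Moreover, if additionally ‖Dφ(τ;t,x) v‖ ≤ K e^{−λ(τ−t)} ‖v‖ holds for all τ ≥ t with K ≥ 1, λ > 0 and K^p e^{−pλδ} < 1, then this derivative satisfies ‖Dφ(t+δ;t,x) y‖^p − ‖y‖^p ≤ −(1 − K^p e^{−pλδ}) ‖y‖^p. -/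

import Mathlib

noncomputable section

/-- The Euclidean state space. -/
abbrev E (n : ℕ) := EuclideanSpace ℝ (Fin n)

/-- The candidate Finsler–Lyapunov function evaluated along the lifted flow:
`g(s) = ∫_s^{s+δ} ‖Dφ(τ;s,φ(s;t,x)) (Dφ(s;t,x) y)‖^p dτ` equals
`∫_s^{s+δ} ‖Dφ(τ;t,x) y‖^p dτ` by the cocycle identity, has right derivative
`‖Dφ(t+δ;t,x) y‖^p − ‖y‖^p` at `s = t`, and under an exponential bound on `Dφ` this
derivative is at most `−(1 − K^p e^{−pλδ}) ‖y‖^p`. -/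
theorem flf_along_flow_right_derivative {n : ℕ} (φ : ℝ → ℝ → E n → E n)
    (hφ0 : ∀ (t₀ : ℝ) (x : E n), φ t₀ t₀ x = x)
    (Dφ : ℝ → ℝ → E n → (E n →L[ℝ] E n))
    (hDφ : ∀ (t t₀ : ℝ) (x : E n), t₀ ≤ t → HasFDerivAt (fun z => φ t t₀ z) (Dφ t t₀ x) x)
    (hcocycle : ∀ (t s τ : ℝ) (x : E n), t ≤ s → s ≤ τ →
      (Dφ τ s (φ s t x)).comp (Dφ s t x) = Dφ τ t x)
    (p δ : ℝ) (hp : 1 ≤ p) (hδ : 0 < δ)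
    (t : ℝ) (x y : E n)
    (hcont : Continuous fun τ => ‖Dφ τ t x y‖ ^ p)
    (g : ℝ → ℝ)
    (hg : ∀ s, t ≤ s →
      g s = ∫ τ in s..(s + δ), ‖Dφ τ s (φ s t x) (Dφ s t x y)‖ ^ p) :
    (∀ s, t ≤ s → g s = ∫ τ in s..(s + δ), ‖Dφ τ t x y‖ ^ p) ∧
    HasDerivWithinAt g (‖Dφ (t + δ) t x y‖ ^ p - ‖y‖ ^ p) (Set.Ici t) t ∧
    (∀ K lam : ℝ, 1 ≤ K → 0 < lam → K ^ p * Real.exp (-(p * lam * δ)) < 1 →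
      (∀ (τ : ℝ) (v : E n), t ≤ τ → ‖Dφ τ t x v‖ ≤ K * Real.exp (-lam * (τ - t)) * ‖v‖) →
      ‖Dφ (t + δ) t x y‖ ^ p - ‖y‖ ^ p ≤
        -(1 - K ^ p * Real.exp (-(p * lam * δ))) * ‖y‖ ^ p) := by
  have part1 : ∀ s, t ≤ s → g s = ∫ τ in s..(s + δ), ‖Dφ τ t x y‖ ^ p := by
    intro s hs
    rw [hg s hs]
    apply intervalIntegral.integral_congr
    intro τ hτ
    rw [Set.uIcc_of_le (by linarith)] at hτ
    have hcc := hcocycle t s τ x hs hτ.1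
    have heq : Dφ τ s (φ s t x) (Dφ s t x y) = Dφ τ t x y := by
      rw [← hcc]; rfl
    dsimp only
    rw [heq]
  have hy : Dφ t t x y = y := by
    have h1 := hDφ t t x le_rfl
    have h2 : (fun z : E n => φ t t z) = fun z => z := funext fun z => hφ0 t z
    rw [h2] at h1
    have h3 := h1.unique (hasFDerivAt_id x)
    rw [h3]; rfl
  have hint : ∀ a b : ℝ,
      IntervalIntegrable (fun τ => ‖Dφ τ t x y‖ ^ p) MeasureTheory.volume a b :=
    fun a b => hcont.intervalIntegrable a b
  have hH : ∀ s : ℝ, HasDerivAt (fun u => ∫ τ in t..u, ‖Dφ τ t x y‖ ^ p)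
      (‖Dφ s t x y‖ ^ p) s :=
    fun s => (hcont.integral_hasStrictDerivAt t s).hasDerivAt
  have hderiv : HasDerivAt
      (fun s => (∫ τ in t..(s + δ), ‖Dφ τ t x y‖ ^ p) - ∫ τ in t..s, ‖Dφ τ t x y‖ ^ p)
      (‖Dφ (t + δ) t x y‖ ^ p - ‖y‖ ^ p) t := by
    have h1 : HasDerivAt (fun s => ∫ τ in t..(s + δ), ‖Dφ τ t x y‖ ^ p)
        (‖Dφ (t + δ) t x y‖ ^ p) t := by
      have := (hH (t + δ)).comp t ((hasDerivAt_id t).add_const δ)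
      simp at this
      exact this
    have h2 := hH t
    rw [hy] at h2
    exact h1.sub h2
  have part2 : HasDerivWithinAt g (‖Dφ (t + δ) t x y‖ ^ p - ‖y‖ ^ p) (Set.Ici t) t := by
    apply hderiv.hasDerivWithinAt.congr
    · intro s hs
      rw [part1 s hs,
        ← intervalIntegral.integral_add_adjacent_intervals (hint t s) (hint s (s + δ))]
      ring
    · simp only [intervalIntegral.integral_same, sub_zero]
      exact part1 t le_rfl
  refine ⟨part1, part2, ?_⟩
  intro K lam hK hlam hKe hbound
  have hb := hbound (t + δ) y (by linarith)
  have hδ' : t + δ - t = δ := by ring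
  rw [hδ'] at hb
  have hp0 : (0 : ℝ) ≤ p := by linarith
  have hpow := Real.rpow_le_rpow (norm_nonneg _) hb hp0
  have hrw : (K * Real.exp (-lam * δ) * ‖y‖) ^ p
      = K ^ p * Real.exp (-(p * lam * δ)) * ‖y‖ ^ p := by
    rw [Real.mul_rpow (by positivity) (norm_nonneg y),
      Real.mul_rpow (by linarith : (0:ℝ) ≤ K) (Real.exp_pos _).le,
      ← Real.exp_mul]
    ring_nf
  rw [hrw] at hpow
  nlinarith [hpow]
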